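/- Let a < b be real numbers, let (u_i)_{i∈ℕ} be an orthonormal family in L²([a,b]), and let (λ_i)_{i∈ℕ} be real numbers with λ_1 ≥ λ_2 ≥ λ_3 ≥ ... ≥ 0 and Σ_i λ_i² < ∞. Let k ∈ L²([a,b]×[a,b]) be the sum of the L²-convergent series Σ_i λ_i u_i ⊗ u_i. Then for every m ∈ ℕ and every choice of functions g_1, ..., g_m ∈ L²([a,b]), one has ‖k − Σ_{j=1}^m g_j ⊗ g_j‖_{L²([a,b]×[a,b])} ≥ ‖k − Σ_{i=1}^m λ_i u_i ⊗ u_i‖_{L²([a,b]×[a,b])} = (Σ_{i=m+1}^∞ λ_i²)^{1/2}; that is, the truncated eigenfunction expansion is the L²-optimal rank-m symmetric approximation to k. -/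

import Mathlib

open MeasureTheory
open scoped RealInnerProductSpace

noncomputable section

namespace Stmt5Aux

variable {α β : Type*} [MeasurableSpace α] [MeasurableSpace β]
  {μ : Measure α} {ν : Measure β} [SigmaFinite μ] [SigmaFinite ν]

set_option linter.unusedSectionVars false in
lemma memLp_tens (p : Lp ℝ 2 μ) (q : Lp ℝ 2 ν) :
    MemLp (fun z : α × β => (p : α → ℝ) z.1 * (q : β → ℝ) z.2) 2 (μ.prod ν) := by
  have hm : AEStronglyMeasurable (fun z : α × β => (p : α → ℝ) z.1 * (q : β → ℝ) z.2) (μ.prod ν) :=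
    ((Lp.aestronglyMeasurable p).comp_fst).mul ((Lp.aestronglyMeasurable q).comp_snd)
  rw [memLp_two_iff_integrable_sq hm]
  have h : (fun z : α × β => ((p : α → ℝ) z.1 * (q : β → ℝ) z.2) ^ 2)
      = fun z : α × β => ((p : α → ℝ) z.1 ^ 2) * ((q : β → ℝ) z.2 ^ 2) := by
    funext z; ring
  rw [h]
  exact ((Lp.memLp p).integrable_sq).mul_prod ((Lp.memLp q).integrable_sq)

def tens (p : Lp ℝ 2 μ) (q : Lp ℝ 2 ν) : Lp ℝ 2 (μ.prod ν) :=
  MemLp.toLp _ (memLp_tens p q)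

lemma coeFn_tens (p : Lp ℝ 2 μ) (q : Lp ℝ 2 ν) :
    (tens p q : α × β → ℝ) =ᵐ[μ.prod ν] fun z => (p : α → ℝ) z.1 * (q : β → ℝ) z.2 :=
  MemLp.coeFn_toLp _

lemma inner_eq (F G : Lp ℝ 2 (μ.prod ν)) (p r : Lp ℝ 2 μ) (q s : Lp ℝ 2 ν)
    (hF : (F : α × β → ℝ) =ᵐ[μ.prod ν] fun z => (p : α → ℝ) z.1 * (q : β → ℝ) z.2)
    (hG : (G : α × β → ℝ) =ᵐ[μ.prod ν] fun z => (r : α → ℝ) z.1 * (s : β → ℝ) z.2) :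
    ⟪F, G⟫ = ⟪p, r⟫ * ⟪q, s⟫ := by
  rw [L2.inner_def, L2.inner_def, L2.inner_def]
  have h1 : ∫ z, ⟪(F : α × β → ℝ) z, (G : α × β → ℝ) z⟫ ∂(μ.prod ν)
      = ∫ z : α × β, ((p : α → ℝ) z.1 * (r : α → ℝ) z.1)
          * ((q : β → ℝ) z.2 * (s : β → ℝ) z.2) ∂(μ.prod ν) := by
    apply integral_congr_ae
    filter_upwards [hF, hG] with z h1 h2
    rw [h1, h2]
    simp only [RCLike.inner_apply, conj_trivial]
    ring
  rw [h1, integral_prod_mul (f := fun x => (p : α → ℝ) x * (r : α → ℝ) x)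
    (g := fun y => (q : β → ℝ) y * (s : β → ℝ) y)]
  congr 1 <;> apply integral_congr_ae <;> filter_upwards with z <;>
    simp [RCLike.inner_apply, mul_comm]

end Stmt5Aux

end

open Stmt5Aux

set_option maxHeartbeats 1000000 in
/-- With `(u i)` orthonormal in `L²([a,b])`, `(λ i)` nonincreasing, nonnegative and
square-summable, and `k` the `L²`-convergent sum `∑ i, λ i • (u i ⊗ u i)`, the truncated
eigenfunction expansion is the `L²`-optimal rank-`m` symmetric approximation to `k`: for any
`g 1, ..., g m ∈ L²([a,b])`,
`‖k − ∑ j, g j ⊗ g j‖ ≥ ‖k − ∑_{i<m} λ i • (u i ⊗ u i)‖ = (∑_{i ≥ m} (λ i)²)^{1/2}`. -/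
theorem stmt5
    (a b : ℝ) (hab : a < b)
    (u : ℕ → Lp ℝ 2 (volume.restrict (Set.Icc a b)))
    (hu : Orthonormal ℝ u)
    (l : ℕ → ℝ) (hmono : Antitone l) (hpos : ∀ i, 0 ≤ l i)
    (hl : Summable fun i => (l i) ^ 2)
    (w : ℕ → Lp ℝ 2 ((volume.restrict (Set.Icc a b)).prod (volume.restrict (Set.Icc a b))))
    (hw : ∀ i : ℕ,
      (w i : ℝ × ℝ → ℝ)
        =ᵐ[(volume.restrict (Set.Icc a b)).prod (volume.restrict (Set.Icc a b))]
      fun p : ℝ × ℝ => (u i : ℝ → ℝ) p.1 * (u i : ℝ → ℝ) p.2)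
    (k : Lp ℝ 2 ((volume.restrict (Set.Icc a b)).prod (volume.restrict (Set.Icc a b))))
    (hk : HasSum (fun i => l i • w i) k)
    (m : ℕ)
    (g : Fin m → Lp ℝ 2 (volume.restrict (Set.Icc a b)))
    (G : Fin m → Lp ℝ 2 ((volume.restrict (Set.Icc a b)).prod (volume.restrict (Set.Icc a b))))
    (hG : ∀ j : Fin m,
      (G j : ℝ × ℝ → ℝ)
        =ᵐ[(volume.restrict (Set.Icc a b)).prod (volume.restrict (Set.Icc a b))]
      fun p : ℝ × ℝ => (g j : ℝ → ℝ) p.1 * (g j : ℝ → ℝ) p.2) :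
    ‖k - ∑ j : Fin m, G j‖ ≥ ‖k - ∑ i ∈ Finset.range m, l i • w i‖ ∧
    ‖k - ∑ i ∈ Finset.range m, l i • w i‖ = Real.sqrt (∑' i : ℕ, (l (m + i)) ^ 2) := by
  classical
  have hui : ∀ i j : ℕ, ⟪u i, u j⟫ = if i = j then 1 else 0 := orthonormal_iff_ite.mp hu
  have hwinner : ∀ i j : ℕ, ⟪w i, w j⟫ = if i = j then 1 else 0 := by
    intro i j
    rw [Stmt5Aux.inner_eq (w i) (w j) (u i) (u j) (u i) (u j) (hw i) (hw j), hui i j]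
    by_cases h : i = j <;> simp [h]
  -- the tail
  set t := k - ∑ i ∈ Finset.range m, l i • w i with ht_def
  have ht : HasSum (fun i => l (i + m) • w (i + m)) t :=
    (hasSum_nat_add_iff' (f := fun i => l i • w i) m).mpr hk
  have hwt : ∀ i, ⟪w (i + m), t⟫ = l (i + m) := by
    intro i
    have h1 : HasSum (fun n => l (n + m) * ⟪w (i + m), w (n + m)⟫) ⟪w (i + m), t⟫ := by
      simpa using (innerSL ℝ (w (i + m))).hasSum ht
    have h2 : HasSum (fun n => l (n + m) * ⟪w (i + m), w (n + m)⟫) (l (i + m)) := by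
      have he : ∀ n, l (n + m) * ⟪w (i + m), w (n + m)⟫ = if n = i then l (i + m) else 0 := by
        intro n
        rw [hwinner]
        by_cases h : n = i
        · simp [h]
        · have : ¬ (i + m = n + m) := by omega
          simp [h, this, Ne.symm h]
      rw [show (fun n => l (n + m) * ⟪w (i + m), w (n + m)⟫) = fun n => if n = i then l (i + m) else 0 from funext he]
      exact hasSum_ite_eq i _
    exact h1.unique h2
  have htt : ⟪t, t⟫ = ∑' i : ℕ, (l (m + i)) ^ 2 := by
    have h1 : HasSum (fun n => l (n + m) * ⟪t, w (n + m)⟫) ⟪t, t⟫ := by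
      simpa using (innerSL ℝ t).hasSum ht
    have h2 : (fun n => l (n + m) * ⟪t, w (n + m)⟫) = fun n => (l (n + m)) ^ 2 := by
      funext n
      rw [real_inner_comm, hwt n]; ring
    rw [h2] at h1
    rw [← h1.tsum_eq]
    exact tsum_congr fun n => by rw [add_comm]
  have hnorm_t : ‖t‖ = Real.sqrt (∑' i : ℕ, (l (m + i)) ^ 2) := by
    rw [← htt, real_inner_self_eq_norm_sq, Real.sqrt_sq (norm_nonneg _)]
  refine ⟨?_, hnorm_t⟩
  -- the inequality
  set R := ∑ j : Fin m, G j with hR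
  let F : Submodule ℝ (Lp ℝ 2 (volume.restrict (Set.Icc a b))) := Submodule.span ℝ (Set.range g)
  haveI : FiniteDimensional ℝ F := FiniteDimensional.span_of_finite ℝ (Set.finite_range g)
  let P : Lp ℝ 2 (volume.restrict (Set.Icc a b)) → Lp ℝ 2 (volume.restrict (Set.Icc a b)) :=
    fun x => (F.orthogonalProjectionOnto x : Lp ℝ 2 (volume.restrict (Set.Icc a b)))
  let d : ℕ → Lp ℝ 2 (volume.restrict (Set.Icc a b)) := fun i => u i - P (u i)
  let c : ℕ → ℝ := fun i => ‖d i‖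
  have hdF : ∀ i : ℕ, ∀ y ∈ F, ⟪d i, y⟫ = 0 := fun i y hy =>
    F.starProjection_inner_eq_zero (u i) y hy
  have hdu : ∀ i j : ℕ, ⟪d i, u j⟫ = ⟪d i, d j⟫ := by
    intro i j
    have hj : u j = d j + P (u j) := by simp [d]
    calc ⟪d i, u j⟫ = ⟪d i, d j + P (u j)⟫ := by rw [← hj]
      _ = ⟪d i, d j⟫ + ⟪d i, P (u j)⟫ := inner_add_right _ _ _
      _ = ⟪d i, d j⟫ := by rw [hdF i _ (SetLike.coe_mem _), add_zero]
  have hdg : ∀ (i : ℕ) (j : Fin m), ⟪d i, g j⟫ = 0 := fun i j =>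
    hdF i _ (Submodule.subset_span (Set.mem_range_self j))
  let x : ℕ → Lp ℝ 2 ((volume.restrict (Set.Icc a b)).prod (volume.restrict (Set.Icc a b))) :=
    fun i => tens (d i) (u i)
  have hxw : ∀ i n : ℕ, ⟪x i, w n⟫ = ⟪d i, u n⟫ * ⟪u i, u n⟫ := fun i n =>
    Stmt5Aux.inner_eq _ _ _ _ _ _ (coeFn_tens _ _) (hw n)
  have hxx : ∀ i j : ℕ, ⟪x i, x j⟫ = ⟪d i, d j⟫ * ⟪u i, u j⟫ := fun i j =>
    Stmt5Aux.inner_eq _ _ _ _ _ _ (coeFn_tens _ _) (coeFn_tens _ _)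
  have hxG : ∀ (i : ℕ) (j : Fin m), ⟪x i, G j⟫ = 0 := by
    intro i j
    rw [Stmt5Aux.inner_eq _ _ _ _ _ _ (coeFn_tens _ _) (hG j), hdg]
    ring
  have hxk : ∀ i, ⟪x i, k⟫ = l i * (c i) ^ 2 := by
    intro i
    have h1 : HasSum (fun n => l n * ⟪x i, w n⟫) ⟪x i, k⟫ := by
      simpa using (innerSL ℝ (x i)).hasSum hk
    have h2 : (fun n => l n * ⟪x i, w n⟫) = fun n => if n = i then l i * (c i) ^ 2 else 0 := by
      funext n
      rw [hxw, hdu, hui]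
      by_cases h : n = i
      · subst h
        rw [real_inner_self_eq_norm_sq]
        simp [c]
      · have h' : ¬ (i = n) := fun hh => h hh.symm
        simp [h, h']
    rw [h2] at h1
    exact h1.unique (hasSum_ite_eq i _)
  have hxkR : ∀ i, ⟪x i, k - R⟫ = l i * (c i) ^ 2 := by
    intro i
    rw [inner_sub_right, hxk, hR, inner_sum]
    simp [hxG]
  -- Pythagoras
  have hpyth : ∀ i, (c i) ^ 2 = 1 - ‖P (u i)‖ ^ 2 := by
    intro i
    have h0 : ⟪P (u i), d i⟫ = 0 := by
      rw [real_inner_comm]; exact hdF i _ (SetLike.coe_mem _)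
    have hsum : P (u i) + d i = u i := by simp [d]
    have h1 : ‖P (u i) + d i‖ ^ 2 = ‖P (u i)‖ ^ 2 + 2 * ⟪P (u i), d i⟫ + ‖d i‖ ^ 2 :=
      norm_add_sq_real _ _
    rw [hsum, hu.1 i, h0] at h1
    simp only [c]
    nlinarith [h1]
  have htle : ∀ i, ‖P (u i)‖ ^ 2 ≤ 1 := by
    intro i
    have := hpyth i
    nlinarith [sq_nonneg (c i)]
  -- Bessel bound on projections
  have hPsum : ∀ S : Finset ℕ, ∑ i ∈ S, ‖P (u i)‖ ^ 2 ≤ (m : ℝ) := by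
    intro S
    let e := stdOrthonormalBasis ℝ F
    have hre : Module.finrank ℝ F ≤ m := by
      exact (by simpa using finrank_range_le_card (R := ℝ) g : Set.finrank ℝ (Set.range g) ≤ m)
    have hPe : ∀ i, ‖P (u i)‖ ^ 2 = ∑ s, ⟪((e s : F) : Lp ℝ 2 (volume.restrict (Set.Icc a b))), u i⟫ ^ 2 := by
      intro i
      have hy : ∀ s, ⟪((e s : F) : Lp ℝ 2 (volume.restrict (Set.Icc a b))), u i⟫ = ⟪((e s : F) : Lp ℝ 2 (volume.restrict (Set.Icc a b))), P (u i)⟫ := by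
        intro s
        have : ⟪((e s : F) : Lp ℝ 2 (volume.restrict (Set.Icc a b))), d i⟫ = 0 := by
          rw [real_inner_comm]; exact hdF i _ (SetLike.coe_mem _)
        have h4 : ⟪((e s : F) : Lp ℝ 2 (volume.restrict (Set.Icc a b))), d i⟫
            = ⟪((e s : F) : Lp ℝ 2 (volume.restrict (Set.Icc a b))), u i⟫
              - ⟪((e s : F) : Lp ℝ 2 (volume.restrict (Set.Icc a b))), P (u i)⟫ :=
          inner_sub_right _ _ _
        rw [this] at h4
        linarith
      have hnorm : ‖P (u i)‖ ^ 2
          = ∑ s, ⟪((e s : F) : Lp ℝ 2 (volume.restrict (Set.Icc a b))), P (u i)⟫ ^ 2 := by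
        have h2 := e.sum_inner_mul_inner (F.orthogonalProjectionOnto (u i)) (F.orthogonalProjectionOnto (u i))
        have h3 : (⟪F.orthogonalProjectionOnto (u i), F.orthogonalProjectionOnto (u i)⟫ : ℝ)
            = ‖P (u i)‖ ^ 2 := by
          rw [real_inner_self_eq_norm_sq]
          rfl
        rw [← h3, ← h2]
        apply Finset.sum_congr rfl
        intro s _
        rw [show (⟪((e s : F) : Lp ℝ 2 (volume.restrict (Set.Icc a b))), P (u i)⟫ : ℝ)
          = ⟪e s, F.orthogonalProjectionOnto (u i)⟫ from rfl]
        rw [real_inner_comm (F.orthogonalProjectionOnto (u i)) (e s)]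
        ring
      rw [hnorm]
      exact Finset.sum_congr rfl fun s _ => by rw [hy]
    calc ∑ i ∈ S, ‖P (u i)‖ ^ 2 = ∑ i ∈ S, ∑ s, ⟪((e s : F) : Lp ℝ 2 (volume.restrict (Set.Icc a b))), u i⟫ ^ 2 :=
          Finset.sum_congr rfl fun i _ => hPe i
      _ = ∑ s, ∑ i ∈ S, ⟪((e s : F) : Lp ℝ 2 (volume.restrict (Set.Icc a b))), u i⟫ ^ 2 := Finset.sum_comm
      _ ≤ ∑ s : Fin (Module.finrank ℝ F), (1 : ℝ) := by
          apply Finset.sum_le_sum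
          intro s _
          have hb := hu.sum_inner_products_le (𝕜 := ℝ) ((e s : F) : Lp ℝ 2 (volume.restrict (Set.Icc a b))) (s := S)
          have hn : ‖((e s : F) : Lp ℝ 2 (volume.restrict (Set.Icc a b)))‖ = 1 := by
            rw [show ‖((e s : F) : Lp ℝ 2 (volume.restrict (Set.Icc a b)))‖ = ‖e s‖ from rfl]
            exact e.orthonormal.1 s
          calc ∑ i ∈ S, ⟪((e s : F) : Lp ℝ 2 (volume.restrict (Set.Icc a b))), u i⟫ ^ 2
              = ∑ i ∈ S, ‖⟪u i, ((e s : F) : Lp ℝ 2 (volume.restrict (Set.Icc a b)))⟫‖ ^ 2 := by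
                apply Finset.sum_congr rfl
                intro i _
                rw [real_inner_comm, Real.norm_eq_abs, sq_abs]
            _ ≤ ‖((e s : F) : Lp ℝ 2 (volume.restrict (Set.Icc a b)))‖ ^ 2 := hb
            _ = 1 := by rw [hn]; norm_num
      _ = (Module.finrank ℝ F : ℝ) := by simp
      _ ≤ (m : ℝ) := by exact_mod_cast hre
  -- Bessel on k - R
  have hBessel : ∀ S : Finset ℕ, ∑ i ∈ S, (l i) ^ 2 * (c i) ^ 2 ≤ ‖k - R‖ ^ 2 := by
    intro S
    let p : ℕ → Prop := fun i => d i ≠ 0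
    have hdp : DecidablePred p := fun i => Classical.dec _
    let v : {i // p i} → Lp ℝ 2 ((volume.restrict (Set.Icc a b)).prod (volume.restrict (Set.Icc a b))) :=
      fun i => (c i.1)⁻¹ • x i.1
    have hc0 : ∀ i : {i // p i}, c i.1 ≠ 0 := fun i => norm_ne_zero_iff.mpr i.2
    have hv : Orthonormal ℝ v := by
      rw [orthonormal_iff_ite]
      intro i j
      have : ⟪v i, v j⟫ = (c i.1)⁻¹ * ((c j.1)⁻¹ * ⟪x i.1, x j.1⟫) := by
        simp only [v, real_inner_smul_left, real_inner_smul_right]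
        ring
      rw [this, hxx, hui]
      by_cases h : i = j
      · subst h
        simp only [if_pos rfl, mul_one]
        rw [real_inner_self_eq_norm_sq]
        have := hc0 i
        field_simp [c]
        ring
      · have h' : i.1 ≠ j.1 := fun hh => h (Subtype.ext hh)
        simp [h, h']
    have hb := hv.sum_inner_products_le (𝕜 := ℝ) (k - R) (s := S.subtype p)
    have hterm : ∀ i : {i // p i}, ⟪v i, k - R⟫ = l i.1 * c i.1 := by
      intro i
      have : ⟪v i, k - R⟫ = (c i.1)⁻¹ * ⟪x i.1, k - R⟫ := by
        simp [v, real_inner_smul_left]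
      rw [this, hxkR]
      field_simp [hc0 i]
    calc ∑ i ∈ S, (l i) ^ 2 * (c i) ^ 2
        = ∑ i ∈ S with p i, (l i) ^ 2 * (c i) ^ 2 := by
          symm
          apply Finset.sum_filter_of_ne
          intro i _ hne hpi
          apply hne
          have : c i = 0 := by simp [c, hpi]
          rw [this]; ring
      _ = ∑ i ∈ S.subtype p, (l i.1) ^ 2 * (c i.1) ^ 2 :=
          (Finset.sum_subtype_eq_sum_filter (fun i => (l i) ^ 2 * (c i) ^ 2) (p := p)).symm
      _ = ∑ i ∈ S.subtype p, ‖⟪v i, k - R⟫‖ ^ 2 := by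
          apply Finset.sum_congr rfl
          intro i _
          rw [hterm, Real.norm_eq_abs, sq_abs]
          ring
      _ ≤ ‖k - R‖ ^ 2 := hb
  -- combinatorial bound
  have hIco : ∀ N : ℕ, ∑ i ∈ Finset.Ico m (m + N), (l i) ^ 2 ≤ ‖k - R‖ ^ 2 := by
    intro N
    have h1 := hBessel (Finset.range (m + N))
    have h2 := hPsum (Finset.range (m + N))
    have hsplitc : ∀ (f : ℕ → ℝ), ∑ i ∈ Finset.range m, f i + ∑ i ∈ Finset.Ico m (m + N), f i
        = ∑ i ∈ Finset.range (m + N), f i :=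
      fun f => Finset.sum_range_add_sum_Ico f (Nat.le_add_right m N)
    have key : ∑ i ∈ Finset.Ico m (m + N), (l i) ^ 2
        ≤ ∑ i ∈ Finset.range (m + N), (l i) ^ 2 * (c i) ^ 2 := by
      rw [← hsplitc (fun i => (l i) ^ 2 * (c i) ^ 2)]
      have hA : ∑ i ∈ Finset.Ico m (m + N), (l i) ^ 2 * ‖P (u i)‖ ^ 2
          ≤ ∑ i ∈ Finset.range m, (l i) ^ 2 * (c i) ^ 2 := by
        have hstep1 : ∑ i ∈ Finset.Ico m (m + N), (l i) ^ 2 * ‖P (u i)‖ ^ 2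
            ≤ (l m) ^ 2 * ∑ i ∈ Finset.Ico m (m + N), ‖P (u i)‖ ^ 2 := by
          rw [Finset.mul_sum]
          apply Finset.sum_le_sum
          intro i hi
          have him : m ≤ i := (Finset.mem_Ico.mp hi).1
          have hl1 : l i ≤ l m := hmono him
          have : (l i) ^ 2 ≤ (l m) ^ 2 := by nlinarith [hpos i, hpos m]
          nlinarith [sq_nonneg ‖P (u i)‖]
        have hstep2 : (l m) ^ 2 * ∑ i ∈ Finset.Ico m (m + N), ‖P (u i)‖ ^ 2
            ≤ (l m) ^ 2 * ∑ i ∈ Finset.range m, (1 - ‖P (u i)‖ ^ 2) := by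
          apply mul_le_mul_of_nonneg_left _ (sq_nonneg (l m))
          have := hsplitc (fun i => ‖P (u i)‖ ^ 2)
          have hsum1 : ∑ i ∈ Finset.range m, (1 - ‖P (u i)‖ ^ 2)
              = (m : ℝ) - ∑ i ∈ Finset.range m, ‖P (u i)‖ ^ 2 := by
            rw [Finset.sum_sub_distrib]
            simp
          rw [hsum1]
          linarith
        have hstep3 : (l m) ^ 2 * ∑ i ∈ Finset.range m, (1 - ‖P (u i)‖ ^ 2)
            ≤ ∑ i ∈ Finset.range m, (l i) ^ 2 * (c i) ^ 2 := by
          rw [Finset.mul_sum]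
          apply Finset.sum_le_sum
          intro i hi
          have him : i ≤ m := le_of_lt (Finset.mem_range.mp hi)
          have hl1 : l m ≤ l i := hmono him
          have hsq : (l m) ^ 2 ≤ (l i) ^ 2 := by nlinarith [hpos i, hpos m]
          have hci : (c i) ^ 2 = 1 - ‖P (u i)‖ ^ 2 := hpyth i
          rw [hci]
          have h1t : (0 : ℝ) ≤ 1 - ‖P (u i)‖ ^ 2 := by linarith [htle i]
          nlinarith
        linarith
      have hB : ∑ i ∈ Finset.Ico m (m + N), (l i) ^ 2
          = ∑ i ∈ Finset.Ico m (m + N), (l i) ^ 2 * (c i) ^ 2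
            + ∑ i ∈ Finset.Ico m (m + N), (l i) ^ 2 * ‖P (u i)‖ ^ 2 := by
        rw [← Finset.sum_add_distrib]
        apply Finset.sum_congr rfl
        intro i _
        rw [hpyth i]; ring
      linarith
    linarith [key, h1]
  -- conclude
  have hsum2 : Summable (fun i : ℕ => (l (m + i)) ^ 2) := by
    have h := (summable_nat_add_iff (f := fun i => (l i) ^ 2) m).mpr hl
    exact h.congr fun n => by rw [add_comm]
  have hfinal : ∑' i : ℕ, (l (m + i)) ^ 2 ≤ ‖k - R‖ ^ 2 := by
    apply hsum2.tsum_le_of_sum_le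
    intro s
    obtain ⟨N, hN⟩ := s.exists_nat_subset_range
    calc ∑ i ∈ s, (l (m + i)) ^ 2 ≤ ∑ i ∈ Finset.range N, (l (m + i)) ^ 2 := by
          apply Finset.sum_le_sum_of_subset_of_nonneg hN
          intro i _ _
          positivity
      _ = ∑ i ∈ Finset.Ico m (m + N), (l i) ^ 2 := by
          rw [Finset.sum_Ico_eq_sum_range]
          simp
      _ ≤ ‖k - R‖ ^ 2 := hIco N
  rw [hnorm_t]
  rw [← Real.sqrt_sq (norm_nonneg (k - R))]
  exact Real.sqrt_le_sqrt hfinal
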